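/- First-best exceeds second-best information acquisition: let q₁^{FB}(v₁) maximize Π̃(q₁,v₁) = v₁ + (1−q₁)∫_{-∞}^{−v₁}F(v₂|q₁)dv₂ and q₁*(v₁) maximize Π(q₁,v₁) = ψ(v₁) + (1−q₁)∫_{-∞}^{−ψ(v₁)}F(v₂|q₁)dv₂. Then q₁^{FB}(v₁) = q₁*(ψ⁻¹(v₁)) for v₁ ∈ [0,1], q₁^{FB} is strictly increasing, and q₁^{FB}(v₁) ≥ q₁*(v₁) with strict inequality for v₁ ∈ [0,1). -/
import Mathlib


open MeasureTheory Set

/-- First-best exceeds second-best information acquisition: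
`q₁^{FB}(v₁) = q₁*(ψ⁻¹(v₁))` on `[0,1]`, `q₁^{FB}` is strictly increasing on
`[0,1]`, and `q₁^{FB}(v₁) ≥ q₁*(v₁)` with strict inequality for `v₁ < 1`. -/
theorem stmt19 (F : ℝ → ℝ → ℝ) (ψ ψinv q₁FB q₁star : ℝ → ℝ)
    (hψ : StrictMono ψ)
    (hψlt : ∀ v : ℝ, v < 1 → ψ v < v) (hψ1 : ψ 1 = 1)
    (hinv : ∀ v ∈ Icc (0:ℝ) 1, ψ (ψinv v) = v ∧ ψinv v ∈ Icc (0:ℝ) 1)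
    (PrFB Pr : ℝ → ℝ → ℝ)
    (hPrFB : ∀ q v, PrFB q v = v + (1 - q) * ∫ v₂ in Iic (-v), F v₂ q)
    (hPr : ∀ q v, Pr q v = ψ v + (1 - q) * ∫ v₂ in Iic (-ψ v), F v₂ q)
    (hFB : ∀ v ∈ Icc (0:ℝ) 1, IsMaxOn (fun q => PrFB q v) (Icc 0 1) (q₁FB v))
    (hFBuniq : ∀ v ∈ Icc (0:ℝ) 1, ∀ q ∈ Icc (0:ℝ) 1,
        IsMaxOn (fun q' => PrFB q' v) (Icc 0 1) q → q = q₁FB v)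
    (hStar : ∀ v ∈ Icc (0:ℝ) 1, IsMaxOn (fun q => Pr q v) (Icc 0 1) (q₁star v))
    (hStarUniq : ∀ v ∈ Icc (0:ℝ) 1, ∀ q ∈ Icc (0:ℝ) 1,
        IsMaxOn (fun q' => Pr q' v) (Icc 0 1) q → q = q₁star v)
    (hq₁starMem : ∀ v ∈ Icc (0:ℝ) 1, q₁star v ∈ Icc (0:ℝ) 1)
    (hq₁FBMem : ∀ v ∈ Icc (0:ℝ) 1, q₁FB v ∈ Icc (0:ℝ) 1)
    (vt₁ : ℝ) (hcut : vt₁ < ψinv 0)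
    (hmono : StrictMonoOn q₁star (Icc vt₁ 1))
    (hzero : ∀ v : ℝ, v < vt₁ → q₁star v = 0) :
    (∀ v ∈ Icc (0:ℝ) 1, q₁FB v = q₁star (ψinv v)) ∧
    StrictMonoOn q₁FB (Icc 0 1) ∧
    (∀ v ∈ Icc (0:ℝ) 1, q₁star v ≤ q₁FB v ∧ (v < 1 → q₁star v < q₁FB v)) := by
  have key : ∀ v ∈ Icc (0:ℝ) 1, q₁FB v = q₁star (ψinv v) := by
    intro v hv
    obtain ⟨hψψ, hmem⟩ := hinv v hv
    have hfun : (fun q => Pr q (ψinv v)) = fun q => PrFB q v := by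
      funext q; rw [hPr, hPrFB, hψψ]
    have hmax := hStar (ψinv v) hmem
    rw [hfun] at hmax
    exact (hFBuniq v hv (q₁star (ψinv v)) (hq₁starMem (ψinv v) hmem) hmax).symm
  have hmono0 : ∀ v ∈ Icc (0:ℝ) 1, ψinv 0 ≤ ψinv v := by
    intro v hv
    have h0 := hinv 0 (by norm_num)
    have hvv := hinv v hv
    by_contra h; push_neg at h
    have := hψ h
    rw [hvv.1, h0.1] at this
    linarith [hv.1]
  have hinvmem : ∀ v ∈ Icc (0:ℝ) 1, ψinv v ∈ Icc vt₁ 1 := by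
    intro v hv
    exact ⟨le_of_lt (lt_of_lt_of_le hcut (hmono0 v hv)), (hinv v hv).2.2⟩
  have hle : ∀ v ∈ Icc (0:ℝ) 1, v ≤ ψinv v := by
    intro v hv
    obtain ⟨hψψ, hm⟩ := hinv v hv
    by_contra h; push_neg at h
    have hlt := hψ h
    rw [hψψ] at hlt
    rcases lt_or_eq_of_le hv.2 with h1 | h1
    · linarith [hψlt v h1]
    · rw [h1, hψ1] at hlt; linarith [h1]
  have hltinv : ∀ v ∈ Icc (0:ℝ) 1, v < 1 → v < ψinv v := by
    intro v hv h1
    obtain ⟨hψψ, hm⟩ := hinv v hv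
    have : ψ v < ψ (ψinv v) := by rw [hψψ]; exact hψlt v h1
    exact hψ.lt_iff_lt.mp this
  refine ⟨key, ?_, ?_⟩
  · intro a ha b hb hab
    rw [key a ha, key b hb]
    apply hmono (hinvmem a ha) (hinvmem b hb)
    have : ψ (ψinv a) < ψ (ψinv b) := by rw [(hinv a ha).1, (hinv b hb).1]; exact hab
    exact hψ.lt_iff_lt.mp this
  · intro v hv
    rw [key v hv]
    rcases lt_or_ge v vt₁ with hvt | hvt
    · have hz := hzero v hvt
      have hvt0 : 0 < vt₁ := lt_of_le_of_lt hv.1 hvt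
      have h0mem : ψinv 0 ∈ Icc (0:ℝ) 1 := (hinv 0 (by norm_num)).2
      set t := (vt₁ + ψinv 0) / 2 with ht
      have htlt : t < ψinv 0 := by simp only [ht]; linarith
      have htgt : vt₁ < t := by simp only [ht]; linarith
      have htmem : t ∈ Icc vt₁ 1 := ⟨le_of_lt htgt, le_trans (le_of_lt htlt) h0mem.2⟩
      have htmem01 : t ∈ Icc (0:ℝ) 1 := ⟨by linarith, htmem.2⟩
      have ht0 : 0 ≤ q₁star t := (hq₁starMem t htmem01).1
      have htv : t < ψinv v := lt_of_lt_of_le htlt (hmono0 v hv)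
      have := hmono htmem (hinvmem v hv) htv
      constructor
      · rw [hz]; linarith
      · intro _; rw [hz]; linarith
    · have hvmem : v ∈ Icc vt₁ 1 := ⟨hvt, hv.2⟩
      constructor
      · exact hmono.monotoneOn hvmem (hinvmem v hv) (hle v hv)
      · intro h1
        exact hmono hvmem (hinvmem v hv) (hltinv v hv h1)
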